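/- Let n ≥ 1 and let A_n denote the alternating group of even permutations of Fin n. For every λ : Fin n → ℝ, the normalized E-orbit function Ê_λ is an eigenfunction of the Laplace operator on ℝ^n with eigenvalue −4π² ⟨λ, λ⟩: for every x : Fin n → ℝ, ∑_i (d²/dt²)|_{t=0} Ê_λ(x + t • e_i) = −4π² (∑_i (λ i)²) · Ê_λ(x), where e_i is the i-th standard basis vector (Pi.single i 1) and the second derivative is in the real variable t. -/

import Mathlib

private lemma exp_hasDerivAt (c k : ℂ) (t : ℝ) :
    HasDerivAt (fun t : ℝ => Complex.exp (c + k * t)) (k * Complex.exp (c + k * t)) t := by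
  have h1 : HasDerivAt (fun t : ℝ => c + k * t) k t := by
    simpa using ((hasDerivAt_id t).ofReal_comp.const_mul k).const_add c
  simpa [mul_comm] using h1.cexp

private lemma deriv2_sum_exp {ι : Type*} [Fintype ι] (c k : ι → ℂ) :
    deriv (deriv (fun t : ℝ => ∑ σ : ι, Complex.exp (c σ + k σ * t))) 0
      = ∑ σ : ι, (k σ) ^ 2 * Complex.exp (c σ) := by
  have h : ∀ t : ℝ, HasDerivAt (fun t : ℝ => ∑ σ : ι, Complex.exp (c σ + k σ * t))
      (∑ σ : ι, k σ * Complex.exp (c σ + k σ * t)) t := fun t =>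
    HasDerivAt.fun_sum fun σ _ => exp_hasDerivAt (c σ) (k σ) t
  have hd : deriv (fun t : ℝ => ∑ σ : ι, Complex.exp (c σ + k σ * t))
      = fun t : ℝ => ∑ σ : ι, k σ * Complex.exp (c σ + k σ * t) :=
    funext fun t => (h t).deriv
  rw [hd]
  have h2 : HasDerivAt (fun t : ℝ => ∑ σ : ι, k σ * Complex.exp (c σ + k σ * t))
      (∑ σ : ι, k σ * (k σ * Complex.exp (c σ + k σ * 0))) 0 :=
    HasDerivAt.fun_sum fun σ _ => (exp_hasDerivAt (c σ) (k σ) 0).const_mul (k σ)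
  have := h2.deriv
  rw [this]
  refine Finset.sum_congr rfl fun σ _ => ?_
  push_cast [mul_zero, add_zero]
  ring


/-- The normalized `E`-orbit function
`Ê_λ(x) = ∑_{σ ∈ Aₙ} exp(2πi ∑ᵢ λ(σ⁻¹ i) · x i)`. -/
noncomputable def Ehat (n : ℕ) (lam x : Fin n → ℝ) : ℂ :=
  ∑ σ : alternatingGroup (Fin n),
    Complex.exp (2 * (Real.pi : ℂ) * Complex.I *
      ((∑ i, lam ((σ : Equiv.Perm (Fin n))⁻¹ i) * x i : ℝ) : ℂ))

/-- `E`-orbit functions are eigenfunctions of the Laplace operator with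
eigenvalue `−4π² ⟨λ, λ⟩`. -/
theorem Ehat_laplacian (n : ℕ) (hn : 1 ≤ n) (lam x : Fin n → ℝ) :
    ∑ i : Fin n,
        deriv (deriv (fun t : ℝ => Ehat n lam (x + t • (Pi.single i 1 : Fin n → ℝ)))) 0 =
      -4 * (Real.pi : ℂ) ^ 2 * ((∑ i, (lam i) ^ 2 : ℝ) : ℂ) * Ehat n lam x := by
  set c : alternatingGroup (Fin n) → ℂ := fun σ =>
    2 * (Real.pi : ℂ) * Complex.I *
      ((∑ j, lam ((σ : Equiv.Perm (Fin n))⁻¹ j) * x j : ℝ) : ℂ) with hc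
  have key : ∀ i : Fin n,
      deriv (deriv (fun t : ℝ => Ehat n lam (x + t • (Pi.single i 1 : Fin n → ℝ)))) 0
        = ∑ σ : alternatingGroup (Fin n),
            (2 * (Real.pi : ℂ) * Complex.I * (lam ((σ : Equiv.Perm (Fin n))⁻¹ i) : ℂ)) ^ 2 *
              Complex.exp (c σ) := by
    intro i
    have hfun : (fun t : ℝ => Ehat n lam (x + t • (Pi.single i 1 : Fin n → ℝ)))
        = fun t : ℝ => ∑ σ : alternatingGroup (Fin n),
            Complex.exp (c σ +
              (2 * (Real.pi : ℂ) * Complex.I * (lam ((σ : Equiv.Perm (Fin n))⁻¹ i) : ℂ)) * t) := by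
      funext t
      unfold Ehat
      refine Finset.sum_congr rfl fun σ _ => ?_
      congr 1
      have hre : (∑ j, lam ((σ : Equiv.Perm (Fin n))⁻¹ j) *
            (x + t • (Pi.single i 1 : Fin n → ℝ)) j : ℝ)
          = (∑ j, lam ((σ : Equiv.Perm (Fin n))⁻¹ j) * x j)
            + lam ((σ : Equiv.Perm (Fin n))⁻¹ i) * t := by
        simp only [Pi.add_apply, Pi.smul_apply, smul_eq_mul, mul_add, Finset.sum_add_distrib,
          Pi.single_apply, mul_ite, mul_one, mul_zero, Finset.sum_ite_eq', Finset.mem_univ,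
          if_true]
      rw [hre, hc]
      push_cast
      ring
    rw [hfun, deriv2_sum_exp]
  rw [Finset.sum_congr rfl fun i _ => key i, Finset.sum_comm]
  unfold Ehat
  rw [Finset.mul_sum]
  refine Finset.sum_congr rfl fun σ _ => ?_
  rw [← Finset.sum_mul]
  have hsum : ∑ i : Fin n,
      (2 * (Real.pi : ℂ) * Complex.I * (lam ((σ : Equiv.Perm (Fin n))⁻¹ i) : ℂ)) ^ 2
      = -4 * (Real.pi : ℂ) ^ 2 * ((∑ i, (lam i) ^ 2 : ℝ) : ℂ) := by
    have h1 : ∑ i : Fin n, ((lam ((σ : Equiv.Perm (Fin n))⁻¹ i) : ℂ)) ^ 2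
        = ∑ i : Fin n, ((lam i : ℂ)) ^ 2 :=
      Equiv.sum_comp ((σ : Equiv.Perm (Fin n))⁻¹) (fun i => ((lam i : ℂ)) ^ 2)
    calc ∑ i : Fin n,
          (2 * (Real.pi : ℂ) * Complex.I * (lam ((σ : Equiv.Perm (Fin n))⁻¹ i) : ℂ)) ^ 2
        = (2 * (Real.pi : ℂ) * Complex.I) ^ 2 *
            ∑ i : Fin n, ((lam ((σ : Equiv.Perm (Fin n))⁻¹ i) : ℂ)) ^ 2 := by
          rw [Finset.mul_sum]; exact Finset.sum_congr rfl fun i _ => by ring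
      _ = -4 * (Real.pi : ℂ) ^ 2 * ((∑ i, (lam i) ^ 2 : ℝ) : ℂ) := by
          rw [h1]; push_cast
          have : Complex.I ^ 2 = -1 := Complex.I_sq
          ring_nf
          rw [Complex.I_sq]
          ring
  rw [hsum, hc]
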